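/- Let u_h, u_v be a basis of ℤ², and let u₋₁ = a·u_h + b·u_v and u₁ = c·u_h + d·u_v be lattice vectors with a·d − b·c = 1. Let C ∈ ℤ², set C_h = C − u_h and C_v = C − u_v, and let D be the intersection point of the line through C_h with direction u₁ and the line through C_v with direction u₋₁ (assume u₁ and u₋₁ are linearly independent). Then D ∈ ℤ², and C − D = a·u₁ + d·u₋₁ = a(c+d)·u_h + d(a+b)·u_v. -/
import Mathlib


open Set

/-- The embedding of the lattice `ℤ²` into `ℝ²`. -/
def ι2 (z : Fin 2 → ℤ) : Fin 2 → ℝ := fun i => (z i : ℝ)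

/-- Let `u_h, u_v` be a basis of `ℤ²`, `u₋₁ = a·u_h + b·u_v`, `u₁ = c·u_h + d·u_v` with
`ad − bc = 1`. With `C_h = C − u_h`, `C_v = C − u_v`, let `D` be the intersection of the
line through `C_h` with direction `u₁` and the line through `C_v` with direction `u₋₁`.
Then `D` is a lattice point and `C − D = a·u₁ + d·u₋₁ = a(c+d)·u_h + d(a+b)·u_v`. -/
theorem stmt_10 (uh uv : Fin 2 → ℤ)
    (hbasis : uh 0 * uv 1 - uh 1 * uv 0 = 1 ∨ uh 0 * uv 1 - uh 1 * uv 0 = -1)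
    (a b c d : ℤ) (hdet : a * d - b * c = 1)
    (um u1 : Fin 2 → ℤ) (hum : um = a • uh + b • uv) (hu1 : u1 = c • uh + d • uv)
    (C : Fin 2 → ℤ) (D : Fin 2 → ℝ)
    (hind : LinearIndependent ℝ ![ι2 u1, ι2 um])
    (hD1 : ∃ t : ℝ, D = ι2 (C - uh) + t • ι2 u1)
    (hD2 : ∃ s : ℝ, D = ι2 (C - uv) + s • ι2 um) :
    (∃ Dz : Fin 2 → ℤ, D = ι2 Dz) ∧
    ι2 C - D = (a : ℝ) • ι2 u1 + (d : ℝ) • ι2 um ∧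
    ι2 C - D = ((a * (c + d) : ℤ) : ℝ) • ι2 uh + ((d * (a + b) : ℤ) : ℝ) • ι2 uv := by
  obtain ⟨t, ht⟩ := hD1
  obtain ⟨s, hs⟩ := hD2
  subst hum hu1
  -- key linear relation
  have key : (t + ((a : ℝ) + b)) • ι2 (c • uh + d • uv)
      + (-(s + ((c : ℝ) + d))) • ι2 (a • uh + b • uv) = 0 := by
    funext i
    have h := congrFun ht i
    have h' := congrFun hs i
    have h2 : (t : ℝ) * (c * uh i + d * uv i) - s * (a * uh i + b * uv i)
        = uh i - uv i := by
      have := h.symm.trans h'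
      simp only [ι2, Pi.add_apply, Pi.sub_apply, Pi.smul_apply, smul_eq_mul] at this
      push_cast at this ⊢
      linarith [this]
    simp only [ι2, Pi.add_apply, Pi.smul_apply, Pi.zero_apply, smul_eq_mul]
    push_cast
    have hdr : (a : ℝ) * d - b * c = 1 := by exact_mod_cast hdet
    linear_combination h2 + ((uv i : ℝ) - (uh i : ℝ)) * hdr
  have hli := Fintype.linearIndependent_iff.mp hind
      ![t + ((a : ℝ) + b), -(s + ((c : ℝ) + d))]
      (by
        rw [show (Finset.univ : Finset (Fin 2)) = {0, 1} by decide]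
        simpa [Fin.sum_univ_two] using key)
  have ht0 : t = -((a : ℝ) + b) := by
    have := hli 0
    simp at this
    linarith
  have hDz : D = ι2 (C - uh - (a + b) • (c • uh + d • uv)) := by
    rw [ht, ht0]
    funext i
    simp only [ι2, Pi.add_apply, Pi.sub_apply, Pi.smul_apply, smul_eq_mul]
    push_cast
    ring
  refine ⟨⟨_, hDz⟩, ?_, ?_⟩ <;>
  · rw [hDz]
    funext i
    simp only [ι2, Pi.add_apply, Pi.sub_apply, Pi.smul_apply, smul_eq_mul]
    have hdr : (a : ℝ) * d - b * c = 1 := by exact_mod_cast hdet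
    push_cast
    linear_combination (-(uh i : ℝ)) * hdr
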